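/- Let g ≥ 1, r ≥ 1 and d ≥ r be integers and suppose ρ(g,r,d) := g − (r+1)(g−d+r) < −1. Then there exist an integer d′ > d and a Schubert index α′ of type (r,d′), i.e. integers 0 ≤ α′₀ ≤ ⋯ ≤ α′_r ≤ d′−r, such that α′ᵢ ≤ d′−d for every i = 0,…,r and w(α′) = ρ(g,r,d′) + 1; in particular ρ(g,r,d′,α′) := ρ(g,r,d′) − w(α′) = −1. -/

import Mathlib

lemma sum_step (n a : ℕ) (h : a ≤ n) :
    ∑ j ∈ Finset.range n, (if j < a then (0:ℤ) else 1) = (n : ℤ) - a := by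
  induction n with
  | zero => simp; omega
  | succ n ih =>
    rw [Finset.sum_range_succ]
    by_cases hc : a ≤ n
    · rw [ih hc, if_neg (by omega)]
      push_cast; ring
    · have ha : a = n + 1 := by omega
      subst ha
      rw [if_pos (by omega)]
      have : ∀ j ∈ Finset.range n, (if j < n + 1 then (0:ℤ) else 1) = 0 := by
        intro j hj; rw [if_pos (by simpa using Finset.mem_range.mp hj |>.trans (by omega : n < n + 1))]
      rw [Finset.sum_congr rfl this]
      simp

/-- combinatorial core of the second case of the paper's Lemma on
pointed Brill–Noether divisors.
Let `g ≥ 1`, `r ≥ 1`, `d ≥ r` with `ρ(g,r,d) := g − (r+1)(g−d+r) < −1`.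
Then there exist `d′ > d` and a Schubert index `α′` of type `(r,d′)` with `α′ᵢ ≤ d′−d`
for all `i` and `w(α′) = ρ(g,r,d′) + 1`; in particular `ρ(g,r,d′) − w(α′) = −1`. -/
theorem exists_larger_degree_schubert_index_of_rho_lt_neg_one
    (g d : ℤ) (r : ℕ) (hg : 1 ≤ g) (hr : 1 ≤ r) (hd : (r : ℤ) ≤ d)
    (hρ : g - ((r : ℤ) + 1) * (g - d + r) < -1) :
    ∃ d' : ℤ, d < d' ∧
      ∃ α' : Fin (r + 1) → ℤ,
        (∀ i, 0 ≤ α' i) ∧ Monotone α' ∧ (∀ i, α' i ≤ d' - r) ∧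
        (∀ i, α' i ≤ d' - d) ∧
        (∑ i, α' i = g - ((r : ℤ) + 1) * (g - d' + r) + 1) ∧
        (g - ((r : ℤ) + 1) * (g - d' + r)) - ∑ i, α' i = -1 := by
  set ρ : ℤ := g - ((r : ℤ) + 1) * (g - d + r) with hρdef
  set N : ℤ := -ρ - 1 with hNdef
  have hN : 1 ≤ N := by omega
  set e : ℤ := (N + r) / (r + 1) with hedef
  have hrpos : (0:ℤ) < (r:ℤ) + 1 := by positivity
  have hmod1 : 0 ≤ (N + r) % ((r:ℤ) + 1) := Int.emod_nonneg _ (by omega)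
  have hmod2 : (N + r) % ((r:ℤ) + 1) < (r:ℤ) + 1 := Int.emod_lt_of_pos _ hrpos
  have hdiv : (N + r) % ((r:ℤ) + 1) = N + r - ((r:ℤ) + 1) * e := by
    rw [hedef, Int.emod_def]
  have hkey1 : N ≤ ((r:ℤ) + 1) * e := by omega
  have hkey2 : ((r:ℤ) + 1) * e ≤ N + r := by omega
  have he1 : 1 ≤ e := by nlinarith
  set W : ℤ := ((r:ℤ) + 1) * e - N with hWdef
  have hW0 : 0 ≤ W := by omega
  have hWr : W ≤ r := by omega
  set w : ℕ := W.toNat with hwdef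
  have hwW : (w : ℤ) = W := Int.toNat_of_nonneg hW0
  have hwr : w ≤ r := by omega
  refine ⟨d + e, by omega, fun i => if (i : ℕ) < r + 1 - w then 0 else 1, ?_, ?_, ?_, ?_, ?_, ?_⟩
  · intro i; dsimp; split <;> norm_num
  · intro i j hij; dsimp
    split <;> split <;> simp_all <;> omega
  · intro i; dsimp; split
    · omega
    · omega
  · intro i; dsimp; split <;> omega
  · have hsum : ∑ i : Fin (r + 1), (if (i : ℕ) < r + 1 - w then (0:ℤ) else 1)
        = ((r:ℤ) + 1) - ((r + 1 - w : ℕ) : ℤ) := by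
      rw [Fin.sum_univ_eq_sum_range (fun j => if j < r + 1 - w then (0:ℤ) else 1) (r + 1)]
      have := sum_step (r + 1) (r + 1 - w) (by omega)
      rw [this]; push_cast; ring_nf
    rw [hsum]
    have hc : ((r + 1 - w : ℕ) : ℤ) = (r:ℤ) + 1 - w := by
      push_cast [Nat.cast_sub (by omega : w ≤ r + 1)]; ring
    rw [hc, hwW, hWdef, hNdef, hρdef]
    ring
  · have hsum : ∑ i : Fin (r + 1), (if (i : ℕ) < r + 1 - w then (0:ℤ) else 1)
        = ((r:ℤ) + 1) - ((r + 1 - w : ℕ) : ℤ) := by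
      rw [Fin.sum_univ_eq_sum_range (fun j => if j < r + 1 - w then (0:ℤ) else 1) (r + 1)]
      have := sum_step (r + 1) (r + 1 - w) (by omega)
      rw [this]; push_cast; ring_nf
    rw [hsum]
    have hc : ((r + 1 - w : ℕ) : ℤ) = (r:ℤ) + 1 - w := by
      push_cast [Nat.cast_sub (by omega : w ≤ r + 1)]; ring
    rw [hc, hwW, hWdef, hNdef, hρdef]
    ring
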